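/- Let M be an m×n real matrix whose columns m_1,...,m_n each satisfy ||m_i||_2 ≤ 1. Then for any β ∈ (0,1], there exists a linear subspace W of ℝ^n with dim(W) ≥ (1-β)n such that for all y ∈ W, ||My||_2^2 ≤ (1/β)||y||_2^2. -/

import Mathlib

open Matrix in
private theorem exists_subspace_contracting_aux (m n : ℕ) (M : Matrix (Fin m) (Fin n) ℝ)
    (hcol : ∀ i : Fin n, ∑ j : Fin m, (M j i) ^ 2 ≤ 1)
    (β : ℝ) (hβ : β ∈ Set.Ioc (0 : ℝ) 1) :
    ∃ W : Submodule ℝ (Fin n → ℝ),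
      (1 - β) * n ≤ (Module.finrank ℝ W : ℝ) ∧
      ∀ y ∈ W, ∑ j : Fin m, (M.mulVec y j) ^ 2 ≤ (1 / β) * ∑ i : Fin n, (y i) ^ 2 := by
  classical
  obtain ⟨hβ0, hβ1⟩ := hβ
  have hPSD : (Mᵀ * M).PosSemidef := by
    have := Matrix.posSemidef_conjTranspose_mul_self M
    simpa using this
  have hA : (Mᵀ * M).IsHermitian := hPSD.isHermitian
  set μ : Fin n → ℝ := hA.eigenvalues with hμ
  have hnn : ∀ i, 0 ≤ μ i := hPSD.eigenvalues_nonneg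
  -- trace = sum of eigenvalues
  have htr : ∑ i, μ i = (Mᵀ * M).trace := by
    conv_rhs => rw [hA.spectral_theorem]
    rw [Unitary.conjStarAlgAut_apply, Matrix.trace_mul_cycle]
    rw [(Matrix.mem_unitaryGroup_iff').mp hA.eigenvectorUnitary.2, one_mul]
    simp [Matrix.trace_diagonal, hμ]
  have htr_le : ∑ i, μ i ≤ (n : ℝ) := by
    rw [htr, Matrix.trace]
    have : ∀ i : Fin n, (Mᵀ * M).diag i = ∑ j : Fin m, (M j i) ^ 2 := by
      intro i
      simp [Matrix.diag, Matrix.mul_apply, pow_two]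
    calc ∑ i, (Mᵀ * M).diag i = ∑ i : Fin n, ∑ j : Fin m, (M j i) ^ 2 := by
            exact Finset.sum_congr rfl fun i _ => this i
      _ ≤ ∑ _i : Fin n, (1 : ℝ) := Finset.sum_le_sum fun i _ => hcol i
      _ = (n : ℝ) := by simp
  -- the good index set
  set S : Finset (Fin n) := Finset.univ.filter (fun i => μ i ≤ 1 / β) with hS
  -- cardinality bound
  have hcard : (1 - β) * n ≤ (S.card : ℝ) := by
    have hTsum : (Sᶜ.card : ℝ) * (1 / β) ≤ ∑ i ∈ Sᶜ, μ i := by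
      rw [Finset.card_eq_sum_ones, Nat.cast_sum]
      rw [Finset.sum_mul]
      apply Finset.sum_le_sum
      intro i hi
      simp only [hS, Finset.mem_compl, Finset.mem_filter, Finset.mem_univ, true_and,
        not_le] at hi
      simpa using hi.le
    have hsub : ∑ i ∈ Sᶜ, μ i ≤ ∑ i, μ i := by
      apply Finset.sum_le_sum_of_subset_of_nonneg (Finset.subset_univ _)
      intro i _ _; exact hnn i
    have h1 : (Sᶜ.card : ℝ) * (1 / β) ≤ n := le_trans hTsum (le_trans hsub htr_le)
    have h2 : (Sᶜ.card : ℝ) ≤ β * n := by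
      rw [mul_one_div, div_le_iff₀ hβ0] at h1
      linarith [h1]
    have h3 : (S.card : ℝ) + (Sᶜ.card : ℝ) = n := by
      have h := Finset.card_add_card_compl S
      rw [Fintype.card_fin] at h
      exact_mod_cast congrArg (Nat.cast : ℕ → ℝ) h
    nlinarith [h2, h3]
  -- the subspace
  set v : Fin n → (Fin n → ℝ) := fun i => ⇑(hA.eigenvectorBasis i) with hv
  set f : S → (Fin n → ℝ) := fun i => v i.1 with hf
  refine ⟨Submodule.span ℝ (Set.range f), ?_, ?_⟩
  · -- dimension
    have hON : Orthonormal ℝ hA.eigenvectorBasis := hA.eigenvectorBasis.orthonormal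
    have hli : LinearIndependent ℝ f := by
      have : LinearIndependent ℝ (fun i : S => hA.eigenvectorBasis i.1) :=
        hON.linearIndependent.comp _ Subtype.coe_injective
      exact this.map' (WithLp.linearEquiv 2 ℝ (Fin n → ℝ)).toLinearMap (LinearEquiv.ker _)
    rw [finrank_span_eq_card hli]
    simp only [Fintype.card_coe]
    exact hcard
  · -- the quadratic bound
    intro y hy
    rw [Submodule.mem_span_range_iff_exists_fun] at hy
    obtain ⟨c, hc⟩ := hy
    -- dot product facts
    have hdot : ∀ i k : Fin n, v i ⬝ᵥ v k = if i = k then (1:ℝ) else 0 := by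
      intro i k
      have := orthonormal_iff_ite.mp hA.eigenvectorBasis.orthonormal i k
      rw [← this]
      simp [PiLp.inner_apply, dotProduct, v, mul_comm]
    have hAv : ∀ i : Fin n, (Mᵀ * M) *ᵥ v i = μ i • v i := fun i =>
      hA.mulVec_eigenvectorBasis i
    -- quadratic form identity
    have hquad : ∑ j : Fin m, (M.mulVec y j) ^ 2 = ((Mᵀ * M) *ᵥ y) ⬝ᵥ y := by
      have h1 : ∑ j : Fin m, (M.mulVec y j) ^ 2 = (M *ᵥ y) ⬝ᵥ (M *ᵥ y) := by
        simp [dotProduct, pow_two]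
      rw [h1, Matrix.dotProduct_mulVec, ← Matrix.mulVec_transpose,
        Matrix.mulVec_mulVec]
    have hnorm : ∑ i : Fin n, (y i) ^ 2 = y ⬝ᵥ y := by
      simp [dotProduct, pow_two]
    -- key bilinear expansion
    have key : ∀ a b : S → ℝ,
        (∑ i : S, a i • v i.1) ⬝ᵥ (∑ k : S, b k • v k.1) = ∑ i : S, a i * b i := by
      intro a b
      have happ : ∀ (a : S → ℝ) (j : Fin n),
          (∑ i : S, a i • v i.1) j = ∑ i : S, a i * v i.1 j := by
        intro a j; simp
      calc (∑ i : S, a i • v i.1) ⬝ᵥ (∑ k : S, b k • v k.1)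
          = ∑ j : Fin n, (∑ i : S, a i * v i.1 j) * (∑ k : S, b k * v k.1 j) := by
            refine Finset.sum_congr rfl fun j _ => ?_
            rw [happ a j, happ b j]
        _ = ∑ j : Fin n, ∑ i : S, ∑ k : S, (a i * v i.1 j) * (b k * v k.1 j) := by
            refine Finset.sum_congr rfl fun j _ => ?_
            rw [Finset.sum_mul_sum]
        _ = ∑ i : S, ∑ k : S, a i * b k * (v i.1 ⬝ᵥ v k.1) := by
            rw [Finset.sum_comm]
            refine Finset.sum_congr rfl fun i _ => ?_
            rw [Finset.sum_comm]
            refine Finset.sum_congr rfl fun k _ => ?_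
            rw [dotProduct, Finset.mul_sum]
            refine Finset.sum_congr rfl fun j _ => by ring
        _ = ∑ i : S, a i * b i := by
            refine Finset.sum_congr rfl fun i _ => ?_
            rw [Finset.sum_eq_single i]
            · rw [hdot]; simp
            · intro k _ hk
              rw [hdot]
              have : ¬ (i.1 = k.1) := fun h => hk (Subtype.ext h.symm)
              simp [this]
            · intro h; exact absurd (Finset.mem_univ i) h
    -- expand y and A y
    have hAy : (Mᵀ * M) *ᵥ y = ∑ i : S, (μ i.1 * c i) • v i.1 := by
      rw [← hc]
      have := map_sum (Matrix.mulVecLin (Mᵀ * M)) (fun i : S => c i • f i) Finset.univ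
      simp only [Matrix.mulVecLin_apply] at this
      rw [this]
      refine Finset.sum_congr rfl fun i _ => ?_
      rw [Matrix.mulVec_smul, hAv i.1, smul_smul, mul_comm (c i) (μ i.1)]
    have hyy : y ⬝ᵥ y = ∑ i : S, (c i) ^ 2 := by
      rw [← hc]
      have := key c c
      simpa [pow_two] using this
    have hAyy : ((Mᵀ * M) *ᵥ y) ⬝ᵥ y = ∑ i : S, μ i.1 * (c i) ^ 2 := by
      rw [hAy]
      nth_rewrite 1 [← hc]
      have := key (fun i => μ i.1 * c i) c
      rw [this]
      refine Finset.sum_congr rfl fun i _ => by ring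
    rw [hquad, hnorm, hAyy, hyy, Finset.mul_sum]
    refine Finset.sum_le_sum fun i _ => ?_
    have hμi : μ i.1 ≤ 1 / β := (Finset.mem_filter.mp i.2).2
    exact mul_le_mul_of_nonneg_right hμi (sq_nonneg _)

/-- Lemma 7 (col1matr): if every column of an `m × n` real matrix `M` has `ℓ₂`-norm at
most `1`, then for any `β ∈ (0,1]` there is a subspace `W ⊆ ℝⁿ` with
`dim W ≥ (1-β)n` such that `‖My‖₂² ≤ (1/β)‖y‖₂²` for all `y ∈ W`. -/
theorem exists_subspace_contracting (m n : ℕ) (M : Matrix (Fin m) (Fin n) ℝ)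
    (hcol : ∀ i : Fin n, ∑ j : Fin m, (M j i) ^ 2 ≤ 1)
    (β : ℝ) (hβ : β ∈ Set.Ioc (0 : ℝ) 1) :
    ∃ W : Submodule ℝ (Fin n → ℝ),
      (1 - β) * n ≤ (Module.finrank ℝ W : ℝ) ∧
      ∀ y ∈ W, ∑ j : Fin m, (M.mulVec y j) ^ 2 ≤ (1 / β) * ∑ i : Fin n, (y i) ^ 2 :=
  exists_subspace_contracting_aux m n M hcol β hβ
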